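/- The exponential generating function for the number of assembly trees of complete multipartite graphs $K_{(n_1,\dots,n_N)}$ is $A(\mathbf{x}) = 1 - \sqrt{1 - N + \sum_{i=1}^N (1-x_i)^2}$; in particular for complete bipartite graphs $K_{n_1,n_2}$ it is $A(x,y) = 1 - \sqrt{(1-x)^2 + (1-y)^2 - 1}$. -/

import Mathlib

/-- The family of labels of an assembly tree (edge gluing rule) for a graph `G`:
all singletons, the full vertex set, laminar, with each non-singleton member
split into two disjoint members joined by an edge of `G`; the cardinality
`2|V| - 1` forces the family to be exactly the node labels of a rooted binary
tree with `|V|` leaves. Two assembly trees are equal iff there is a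
label-preserving isomorphism, iff they have the same label family. -/
def IsAssemblyFamily {V : Type*} [Fintype V] [DecidableEq V]
    (G : SimpleGraph V) (F : Finset (Finset V)) : Prop :=
  (∀ v : V, {v} ∈ F) ∧
  (Finset.univ ∈ F) ∧
  (∀ U ∈ F, U.Nonempty) ∧
  (∀ U₁ ∈ F, ∀ U₂ ∈ F, U₁ ⊆ U₂ ∨ U₂ ⊆ U₁ ∨ Disjoint U₁ U₂) ∧
  (∀ U ∈ F, 2 ≤ U.card → ∃ U₁ ∈ F, ∃ U₂ ∈ F, Disjoint U₁ U₂ ∧ U₁ ∪ U₂ = U ∧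
      ∃ v₁ ∈ U₁, ∃ v₂ ∈ U₂, G.Adj v₁ v₂) ∧
  F.card = 2 * Fintype.card V - 1

/-- The number of assembly trees of `G` using the edge gluing rule. -/
noncomputable def assemblyTreeCount {V : Type*} [Fintype V] [DecidableEq V]
    (G : SimpleGraph V) : ℕ :=
  Nat.card {F : Finset (Finset V) // IsAssemblyFamily G F}

/-- The complete multipartite graph with parts of sizes `n 0, …, n (N-1)`. -/
def completeMultipartiteGraph' {N : ℕ} (n : Fin N → ℕ) :
    SimpleGraph (Σ i : Fin N, Fin (n i)) :=
  SimpleGraph.fromRel (fun u v => u.1 ≠ v.1)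

set_option linter.unusedSectionVars false

open Finset

variable {V : Type*} [Fintype V] [DecidableEq V]

/-- Assembly family relative to a ground set `T`. -/
def IsAF (G : SimpleGraph V) (T : Finset V) (F : Finset (Finset V)) : Prop :=
  (∀ v ∈ T, ({v} : Finset V) ∈ F) ∧
  (T ∈ F) ∧
  (∀ U ∈ F, U.Nonempty) ∧
  (∀ U ∈ F, U ⊆ T) ∧
  (∀ U₁ ∈ F, ∀ U₂ ∈ F, U₁ ⊆ U₂ ∨ U₂ ⊆ U₁ ∨ Disjoint U₁ U₂) ∧
  (∀ U ∈ F, 2 ≤ U.card → ∃ U₁ ∈ F, ∃ U₂ ∈ F, Disjoint U₁ U₂ ∧ U₁ ∪ U₂ = U ∧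
      ∃ v₁ ∈ U₁, ∃ v₂ ∈ U₂, G.Adj v₁ v₂) ∧
  F.card = 2 * T.card - 1

lemma isAF_univ_iff (G : SimpleGraph V) (F : Finset (Finset V)) :
    IsAF G Finset.univ F ↔ IsAssemblyFamily G F := by
  unfold IsAF IsAssemblyFamily
  rw [Finset.card_univ]
  constructor
  · rintro ⟨h1, h2, h3, h4, h5, h6, h7⟩
    exact ⟨fun v => h1 v (mem_univ v), h2, h3, h5, h6, h7⟩
  · rintro ⟨h1, h2, h3, h4, h5, h6⟩
    exact ⟨fun v _ => h1 v, h2, h3, fun U _ => subset_univ U, h4, h5, h6⟩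

lemma laminar_card_le (T : Finset V) : ∀ F : Finset (Finset V),
    (∀ U ∈ F, U.Nonempty) → (∀ U ∈ F, U ⊆ T) →
    (∀ U₁ ∈ F, ∀ U₂ ∈ F, U₁ ⊆ U₂ ∨ U₂ ⊆ U₁ ∨ Disjoint U₁ U₂) →
    F.card ≤ 2 * T.card - 1 := by
  induction T using Finset.strongInduction with
  | _ T ih =>
    intro F hne hsub hlam
    by_cases hall : ∀ U ∈ F, U = T
    · rcases F.eq_empty_or_nonempty with h | ⟨U, hU⟩
      · simp [h]
      · have hT : T ∈ F := hall U hU ▸ hU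
        have h1 : 1 ≤ T.card := Finset.card_pos.mpr (hne T hT)
        have hF : F = {T} := Finset.eq_singleton_iff_unique_mem.mpr ⟨hT, hall⟩
        rw [hF, Finset.card_singleton]; omega
    · push_neg at hall
      obtain ⟨U₀, hU₀, hU₀T⟩ := hall
      have h𝒢ne : (F.filter (· ≠ T)).Nonempty := ⟨U₀, by simp [hU₀, hU₀T]⟩
      obtain ⟨M, hM𝒢, hMmax⟩ := (F.filter (· ≠ T)).exists_max_image Finset.card h𝒢ne
      have hMF : M ∈ F := (mem_filter.mp hM𝒢).1
      have hMT : M ≠ T := (mem_filter.mp hM𝒢).2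
      have hMsub : M ⊆ T := hsub M hMF
      have hMne : M.Nonempty := hne M hMF
      have hMss : M ⊂ T := hMsub.ssubset_of_ne hMT
      have hdisj : ∀ U ∈ F, ¬ U ⊆ M → U ≠ T → Disjoint U M := by
        intro U hU hUM hUT
        rcases hlam U hU M hMF with h | h | h
        · exact absurd h hUM
        · have hle : U.card ≤ M.card := hMmax U (by simp [hU, hUT])
          have : M = U := Finset.eq_of_subset_of_card_le h hle
          exact absurd (this ▸ subset_rfl) hUM
        · exact h
      set F₁ := F.filter (· ⊆ M) with hF₁
      set F₂ := F.filter (fun U => ¬ U ⊆ M ∧ U ≠ T) with hF₂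
      have hsplit : F ⊆ F₁ ∪ F₂ ∪ {T} := by
        intro U hU
        by_cases h1 : U ⊆ M
        · exact mem_union_left _ (mem_union_left _ (mem_filter.mpr ⟨hU, h1⟩))
        by_cases h2 : U = T
        · exact mem_union_right _ (by simp [h2])
        · exact mem_union_left _ (mem_union_right _ (mem_filter.mpr ⟨hU, h1, h2⟩))
      have hc1 : F₁.card ≤ 2 * M.card - 1 :=
        ih M hMss F₁ (fun U hU => hne U (mem_filter.mp hU).1)
          (fun U hU => (mem_filter.mp hU).2)
          (fun a ha b hb => hlam a (mem_filter.mp ha).1 b (mem_filter.mp hb).1)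
      have hTM : T \ M ⊂ T := Finset.sdiff_ssubset hMsub hMne
      have hc2 : F₂.card ≤ 2 * (T \ M).card - 1 := by
        apply ih (T \ M) hTM F₂ (fun U hU => hne U (mem_filter.mp hU).1)
        · intro U hU
          have h := mem_filter.mp hU
          exact Finset.subset_sdiff.mpr ⟨hsub U h.1, hdisj U h.1 h.2.1 h.2.2⟩
        · exact fun a ha b hb => hlam a (mem_filter.mp ha).1 b (mem_filter.mp hb).1
      have hcard : F.card ≤ F₁.card + F₂.card + 1 := by
        calc F.card ≤ (F₁ ∪ F₂ ∪ {T}).card := Finset.card_le_card hsplit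
        _ ≤ (F₁ ∪ F₂).card + ({T} : Finset _).card := Finset.card_union_le _ _
        _ ≤ F₁.card + F₂.card + 1 := by
            have := Finset.card_union_le F₁ F₂
            simp only [Finset.card_singleton]; omega
      have h1 : 1 ≤ M.card := Finset.card_pos.mpr hMne
      have h2 : M.card < T.card := Finset.card_lt_card hMss
      have h3 : (T \ M).card = T.card - M.card := Finset.card_sdiff_of_subset hMsub
      omega

lemma atc_eq_zero_of_card_eq_zero (G : SimpleGraph V) (h : Fintype.card V = 0) :
    assemblyTreeCount G = 0 := by
  have : IsEmpty {F : Finset (Finset V) // IsAssemblyFamily G F} := by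
    constructor
    rintro ⟨F, hF⟩
    obtain ⟨v, -⟩ := hF.2.2.1 _ hF.2.1
    exact (Fintype.card_eq_zero_iff.mp h).false v
  rw [assemblyTreeCount, Nat.card_of_isEmpty]

lemma atc_eq_one_of_card_eq_one (G : SimpleGraph V) (h : Fintype.card V = 1) :
    assemblyTreeCount G = 1 := by
  have huniv : (Finset.univ : Finset V).card = 1 := by rw [card_univ, h]
  have key : ∀ F, IsAssemblyFamily G F ↔ F = {Finset.univ} := by
    intro F
    constructor
    · intro hF
      have hc : F.card = 1 := by rw [hF.2.2.2.2.2, h]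
      obtain ⟨x, hx⟩ := Finset.card_eq_one.mp hc
      have := hF.2.1
      rw [hx] at this ⊢
      rw [Finset.mem_singleton.mp this]
    · rintro rfl
      refine ⟨fun v => ?_, by simp, ?_, ?_, ?_, ?_⟩
      · have : ({v} : Finset V) = Finset.univ :=
          Finset.eq_of_subset_of_card_le (subset_univ _) (by simp [huniv])
        simp [this]
      · intro U hU; rw [Finset.mem_singleton.mp hU]
        exact Finset.card_pos.mp (by rw [huniv]; norm_num)
      · intro U₁ h₁ U₂ h₂
        rw [Finset.mem_singleton.mp h₁, Finset.mem_singleton.mp h₂]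
        exact Or.inl subset_rfl
      · intro U hU h2
        rw [Finset.mem_singleton.mp hU, huniv] at h2; omega
      · simp [h]
  rw [assemblyTreeCount]
  rw [Nat.card_eq_one_iff_unique]
  constructor
  · constructor
    rintro ⟨F₁, h₁⟩ ⟨F₂, h₂⟩
    simp only [Subtype.mk_eq_mk]
    rw [(key F₁).mp h₁, (key F₂).mp h₂]
  · exact ⟨⟨{Finset.univ}, (key _).mpr rfl⟩⟩

lemma atc_eq_zero_of_edgeless (G : SimpleGraph V) (h2 : 2 ≤ Fintype.card V)
    (h : ∀ u v : V, ¬ G.Adj u v) : assemblyTreeCount G = 0 := by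
  have : IsEmpty {F : Finset (Finset V) // IsAssemblyFamily G F} := by
    constructor
    rintro ⟨F, hF⟩
    obtain ⟨U₁, -, U₂, -, -, -, v₁, -, v₂, -, hadj⟩ :=
      hF.2.2.2.2.1 Finset.univ hF.2.1 (by rw [card_univ]; exact h2)
    exact h v₁ v₂ hadj
  rw [assemblyTreeCount, Nat.card_of_isEmpty]
set_option linter.unusedSectionVars false

variable {W : Type*} [Fintype W] [DecidableEq W]

/-- Push a family of subsets of `W` forward along an embedding. -/
def liftF (ψ : W ↪ V) (F : Finset (Finset W)) : Finset (Finset V) :=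
  F.image (fun U => U.image ψ)

lemma liftF_injective (ψ : W ↪ V) : Function.Injective (liftF ψ) :=
  Finset.image_injective (Finset.image_injective ψ.injective)

lemma isAF_liftF_iff (G : SimpleGraph V) (H : SimpleGraph W) (ψ : W ↪ V)
    (h : ∀ x y, G.Adj (ψ x) (ψ y) ↔ H.Adj x y) (F : Finset (Finset W)) :
    IsAF G (Finset.univ.image ψ) (liftF ψ F) ↔ IsAssemblyFamily H F := by
  have hmem : ∀ A, A ∈ liftF ψ F ↔ ∃ U ∈ F, U.image ψ = A := by
    intro A; simp [liftF]
  have hinj : ∀ U U' : Finset W, U.image ψ = U'.image ψ → U = U' :=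
    fun U U' h' => Finset.image_injective ψ.injective h'
  have hss : ∀ U U' : Finset W, U.image ψ ⊆ U'.image ψ ↔ U ⊆ U' :=
    fun U U' => Finset.image_subset_image_iff ψ.injective
  have hdisj : ∀ U U' : Finset W, Disjoint (U.image ψ) (U'.image ψ) ↔ Disjoint U U' :=
    fun U U' => Finset.disjoint_image ψ.injective
  have hcard : ∀ U : Finset W, (U.image ψ).card = U.card :=
    fun U => Finset.card_image_of_injective U ψ.injective
  have hTcard : (Finset.univ.image ψ).card = Fintype.card W := by
    rw [Finset.card_image_of_injective _ ψ.injective, card_univ]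
  have hFcard : (liftF ψ F).card = F.card :=
    Finset.card_image_of_injective F (Finset.image_injective ψ.injective)
  constructor
  · rintro ⟨h1, h2, h3, h4, h5, h6, h7⟩
    refine ⟨?_, ?_, ?_, ?_, ?_, ?_⟩
    · intro w
      obtain ⟨U, hU, hUeq⟩ := (hmem _).mp (h1 (ψ w) (Finset.mem_image_of_mem ψ (mem_univ w)))
      have : U = {w} := hinj _ _ (by rw [hUeq]; simp)
      rwa [this] at hU
    · obtain ⟨U, hU, hUeq⟩ := (hmem _).mp h2
      have : U = Finset.univ := hinj _ _ hUeq
      rwa [this] at hU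
    · intro U hU
      have := h3 _ ((hmem _).mpr ⟨U, hU, rfl⟩)
      rwa [Finset.image_nonempty] at this
    · intro U₁ hU₁ U₂ hU₂
      have := h5 _ ((hmem _).mpr ⟨U₁, hU₁, rfl⟩) _ ((hmem _).mpr ⟨U₂, hU₂, rfl⟩)
      rwa [hss, hss, hdisj] at this
    · intro U hU hUc
      obtain ⟨A₁, hA₁, A₂, hA₂, hd, hu, v₁, hv₁, v₂, hv₂, hadj⟩ :=
        h6 (U.image ψ) ((hmem _).mpr ⟨U, hU, rfl⟩) (by rw [hcard]; exact hUc)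
      obtain ⟨U₁, hU₁, rfl⟩ := (hmem _).mp hA₁
      obtain ⟨U₂, hU₂, rfl⟩ := (hmem _).mp hA₂
      obtain ⟨x₁, hx₁, rfl⟩ := Finset.mem_image.mp hv₁
      obtain ⟨x₂, hx₂, rfl⟩ := Finset.mem_image.mp hv₂
      refine ⟨U₁, hU₁, U₂, hU₂, (hdisj _ _).mp hd, ?_, x₁, hx₁, x₂, hx₂, (h _ _).mp hadj⟩
      apply hinj; rw [Finset.image_union]; exact hu
    · rw [← hFcard, h7, hTcard]
  · rintro ⟨h1, h2, h3, h4, h5, h6⟩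
    refine ⟨?_, ?_, ?_, ?_, ?_, ?_, ?_⟩
    · intro v hv
      obtain ⟨w, -, rfl⟩ := Finset.mem_image.mp hv
      exact (hmem _).mpr ⟨{w}, h1 w, by simp⟩
    · exact (hmem _).mpr ⟨Finset.univ, h2, rfl⟩
    · intro A hA
      obtain ⟨U, hU, rfl⟩ := (hmem _).mp hA
      rw [Finset.image_nonempty]; exact h3 U hU
    · intro A hA
      obtain ⟨U, hU, rfl⟩ := (hmem _).mp hA
      exact Finset.image_subset_image (subset_univ U)
    · intro A₁ hA₁ A₂ hA₂
      obtain ⟨U₁, hU₁, rfl⟩ := (hmem _).mp hA₁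
      obtain ⟨U₂, hU₂, rfl⟩ := (hmem _).mp hA₂
      rw [hss, hss, hdisj]
      exact h4 U₁ hU₁ U₂ hU₂
    · intro A hA hAc
      obtain ⟨U, hU, rfl⟩ := (hmem _).mp hA
      rw [hcard] at hAc
      obtain ⟨U₁, hU₁, U₂, hU₂, hd, hu, x₁, hx₁, x₂, hx₂, hadj⟩ := h5 U hU hAc
      exact ⟨U₁.image ψ, (hmem _).mpr ⟨U₁, hU₁, rfl⟩, U₂.image ψ, (hmem _).mpr ⟨U₂, hU₂, rfl⟩,
        (hdisj _ _).mpr hd, by rw [← Finset.image_union, hu],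
        ψ x₁, Finset.mem_image_of_mem ψ hx₁, ψ x₂, Finset.mem_image_of_mem ψ hx₂,
        (h _ _).mpr hadj⟩
    · rw [hFcard, h6, hTcard]

lemma card_isAF_eq (G : SimpleGraph V) (H : SimpleGraph W) (ψ : W ↪ V)
    (h : ∀ x y, G.Adj (ψ x) (ψ y) ↔ H.Adj x y) :
    Nat.card {F : Finset (Finset V) // IsAF G (Finset.univ.image ψ) F} = assemblyTreeCount H := by
  rw [assemblyTreeCount]
  symm
  apply Nat.card_eq_of_bijective
    (f := fun F' => (⟨liftF ψ F'.1, (isAF_liftF_iff G H ψ h F'.1).mpr F'.2⟩ :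
      {F : Finset (Finset V) // IsAF G (Finset.univ.image ψ) F}))
  constructor
  · rintro ⟨F₁, h₁⟩ ⟨F₂, h₂⟩ he
    simp only [Subtype.mk_eq_mk] at he ⊢
    exact liftF_injective ψ he
  · rintro ⟨F, hF⟩
    have hsubT : ∀ A ∈ F, A ⊆ Finset.univ.image ψ := hF.2.2.2.1
    set F' : Finset (Finset W) := F.image (fun A => Finset.univ.filter (fun w => ψ w ∈ A))
      with hF'
    have hlift : liftF ψ F' = F := by
      rw [hF', liftF, Finset.image_image]
      have : ∀ A ∈ F, ((Finset.univ.filter (fun w => ψ w ∈ A)).image ψ) = A := by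
        intro A hA
        ext v
        simp only [Finset.mem_image, Finset.mem_filter, mem_univ, true_and]
        constructor
        · rintro ⟨w, hw, rfl⟩; exact hw
        · intro hv
          obtain ⟨w, -, rfl⟩ := Finset.mem_image.mp (hsubT A hA hv)
          exact ⟨w, hv, rfl⟩
      calc F.image (fun A => (Finset.univ.filter (fun w => ψ w ∈ A)).image ψ)
          = F.image id := Finset.image_congr (fun A hA => this A hA)
        _ = F := Finset.image_id
    refine ⟨⟨F', ?_⟩, ?_⟩
    · exact (isAF_liftF_iff G H ψ h F').mp (by rw [hlift]; exact hF)
    · simp only [Subtype.mk_eq_mk]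
      exact hlift
lemma subset_compl_of_disjoint {U S : Finset V} (h : Disjoint U S) : U ⊆ Sᶜ :=
  fun v hv => Finset.mem_compl.mpr (fun hS => Finset.disjoint_left.mp h hv hS)

lemma mem_of_split (G : SimpleGraph V) {F : Finset (Finset V)} (hF : IsAssemblyFamily G F)
    {S : Finset V} (hS : S ∈ F) (hSc : Sᶜ ∈ F) {U : Finset V} (hU : U ∈ F)
    (hUuniv : U ≠ Finset.univ) : U ⊆ S ∨ U ⊆ Sᶜ := by
  rcases hF.2.2.2.1 U hU S hS with h | h | h
  · exact Or.inl h
  · rcases hF.2.2.2.1 U hU Sᶜ hSc with h' | h' | h'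
    · exact Or.inr h'
    · exfalso
      apply hUuniv
      apply Finset.univ_subset_iff.mp
      intro v _
      by_cases hv : v ∈ S
      · exact h hv
      · exact h' (Finset.mem_compl.mpr hv)
    · left
      have := subset_compl_of_disjoint h'
      rwa [compl_compl] at this
  · exact Or.inr (subset_compl_of_disjoint h)

lemma isAF_filter_aux (G : SimpleGraph V) {F : Finset (Finset V)} (hF : IsAssemblyFamily G F)
    {S : Finset V} (hS : S ∈ F)
    (hcard : (F.filter (· ⊆ S)).card = 2 * S.card - 1) :
    IsAF G S (F.filter (· ⊆ S)) := by
  refine ⟨?_, ?_, ?_, ?_, ?_, ?_, hcard⟩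
  · intro v hv
    exact mem_filter.mpr ⟨hF.1 v, Finset.singleton_subset_iff.mpr hv⟩
  · exact mem_filter.mpr ⟨hS, subset_rfl⟩
  · exact fun U hU => hF.2.2.1 U (mem_filter.mp hU).1
  · exact fun U hU => (mem_filter.mp hU).2
  · exact fun U₁ h₁ U₂ h₂ => hF.2.2.2.1 U₁ (mem_filter.mp h₁).1 U₂ (mem_filter.mp h₂).1
  · intro U hU h2
    obtain ⟨hUF, hUS⟩ := mem_filter.mp hU
    obtain ⟨U₁, hU₁, U₂, hU₂, hd, hu, hedge⟩ := hF.2.2.2.2.1 U hUF h2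
    have hs₁ : U₁ ⊆ U := hu ▸ Finset.subset_union_left
    have hs₂ : U₂ ⊆ U := hu ▸ Finset.subset_union_right
    exact ⟨U₁, mem_filter.mpr ⟨hU₁, hs₁.trans hUS⟩, U₂, mem_filter.mpr ⟨hU₂, hs₂.trans hUS⟩,
      hd, hu, hedge⟩

lemma decomp (G : SimpleGraph V) {F : Finset (Finset V)} (hF : IsAssemblyFamily G F)
    {S : Finset V} (hS : S ∈ F) (hSc : Sᶜ ∈ F) (hS0 : S ≠ ∅) (hSu : S ≠ Finset.univ) :
    IsAF G S (F.filter (· ⊆ S)) ∧ IsAF G Sᶜ (F.filter (· ⊆ Sᶜ)) ∧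
      F = F.filter (· ⊆ S) ∪ F.filter (· ⊆ Sᶜ) ∪ {Finset.univ} := by
  set F₁ := F.filter (· ⊆ S) with hF₁
  set F₂ := F.filter (· ⊆ Sᶜ) with hF₂
  have hdecomp : F = F₁ ∪ F₂ ∪ {Finset.univ} := by
    ext U
    constructor
    · intro hU
      by_cases hUu : U = Finset.univ
      · exact mem_union_right _ (by simp [hUu])
      · rcases mem_of_split G hF hS hSc hU hUu with h | h
        · exact mem_union_left _ (mem_union_left _ (mem_filter.mpr ⟨hU, h⟩))
        · exact mem_union_left _ (mem_union_right _ (mem_filter.mpr ⟨hU, h⟩))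
    · intro hU
      rcases mem_union.mp hU with h | h
      · rcases mem_union.mp h with h' | h'
        · exact (mem_filter.mp h').1
        · exact (mem_filter.mp h').1
      · rw [mem_singleton.mp h]; exact hF.2.1
  have hdisj12 : Disjoint F₁ F₂ := by
    rw [Finset.disjoint_left]
    intro U h₁ h₂
    obtain ⟨v, hv⟩ := hF.2.2.1 U (mem_filter.mp h₁).1
    exact Finset.mem_compl.mp ((mem_filter.mp h₂).2 hv) ((mem_filter.mp h₁).2 hv)
  have huniv1 : Finset.univ ∉ F₁ := by
    intro h
    exact hSu (Finset.univ_subset_iff.mp (mem_filter.mp h).2)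
  have huniv2 : Finset.univ ∉ F₂ := by
    intro h
    have := Finset.univ_subset_iff.mp (mem_filter.mp h).2
    rw [Finset.compl_eq_univ_iff] at this
    exact hS0 this
  have hcardsum : F.card = F₁.card + F₂.card + 1 := by
    conv_lhs => rw [hdecomp]
    rw [Finset.card_union_of_disjoint, Finset.card_union_of_disjoint hdisj12,
      Finset.card_singleton]
    rw [Finset.disjoint_singleton_right]
    intro h
    rcases mem_union.mp h with h' | h'
    · exact huniv1 h'
    · exact huniv2 h'
  have hb1 : F₁.card ≤ 2 * S.card - 1 :=
    laminar_card_le S F₁ (fun U hU => hF.2.2.1 U (mem_filter.mp hU).1)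
      (fun U hU => (mem_filter.mp hU).2)
      (fun a ha b hb => hF.2.2.2.1 a (mem_filter.mp ha).1 b (mem_filter.mp hb).1)
  have hb2 : F₂.card ≤ 2 * Sᶜ.card - 1 :=
    laminar_card_le Sᶜ F₂ (fun U hU => hF.2.2.1 U (mem_filter.mp hU).1)
      (fun U hU => (mem_filter.mp hU).2)
      (fun a ha b hb => hF.2.2.2.1 a (mem_filter.mp ha).1 b (mem_filter.mp hb).1)
  have htot : F.card = 2 * Fintype.card V - 1 := hF.2.2.2.2.2
  have hV : S.card + Sᶜ.card = Fintype.card V := Finset.card_add_card_compl S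
  have h1 : 1 ≤ S.card := Finset.card_pos.mpr (Finset.nonempty_iff_ne_empty.mpr hS0)
  have h2 : S.card < Fintype.card V := by
    rw [← Finset.card_univ]
    exact Finset.card_lt_card (Finset.ssubset_univ_iff.mpr hSu)
  have hc1 : F₁.card = 2 * S.card - 1 := by omega
  have hc2 : F₂.card = 2 * Sᶜ.card - 1 := by omega
  exact ⟨isAF_filter_aux G hF hS hc1, isAF_filter_aux G hF hSc hc2, hdecomp⟩

lemma glue (G : SimpleGraph V) {S : Finset V} {F₁ F₂ : Finset (Finset V)}
    (hS0 : S ≠ ∅) (hSu : S ≠ Finset.univ)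
    (hedge : ∃ v₁ ∈ S, ∃ v₂ ∈ Sᶜ, G.Adj v₁ v₂)
    (h₁ : IsAF G S F₁) (h₂ : IsAF G Sᶜ F₂) :
    IsAssemblyFamily G (F₁ ∪ F₂ ∪ {Finset.univ}) := by
  have sub1 : ∀ U ∈ F₁, U ⊆ S := h₁.2.2.2.1
  have sub2 : ∀ U ∈ F₂, U ⊆ Sᶜ := h₂.2.2.2.1
  have hne1 : ∀ U ∈ F₁, U.Nonempty := h₁.2.2.1
  have hne2 : ∀ U ∈ F₂, U.Nonempty := h₂.2.2.1
  have hSne : S.Nonempty := Finset.nonempty_iff_ne_empty.mpr hS0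
  have hScne : Sᶜ.Nonempty := by
    rcases Finset.eq_empty_or_nonempty Sᶜ with h | h
    · rw [Finset.compl_eq_empty_iff] at h; exact absurd h hSu
    · exact h
  have hU1u : ∀ U ∈ F₁, U ≠ Finset.univ := by
    intro U hU h
    exact hSu (Finset.univ_subset_iff.mp (h ▸ sub1 U hU))
  have hU2u : ∀ U ∈ F₂, U ≠ Finset.univ := by
    intro U hU h
    have := Finset.univ_subset_iff.mp (h ▸ sub2 U hU)
    rw [Finset.compl_eq_univ_iff] at this
    exact hS0 this
  have hmem : ∀ U, U ∈ F₁ ∪ F₂ ∪ {Finset.univ} ↔ U ∈ F₁ ∨ U ∈ F₂ ∨ U = Finset.univ := by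
    intro U
    simp [Finset.mem_union, Finset.mem_singleton, or_assoc]
    tauto
  refine ⟨?_, ?_, ?_, ?_, ?_, ?_⟩
  · intro v
    by_cases hv : v ∈ S
    · exact (hmem _).mpr (Or.inl (h₁.1 v hv))
    · exact (hmem _).mpr (Or.inr (Or.inl (h₂.1 v (Finset.mem_compl.mpr hv))))
  · exact (hmem _).mpr (Or.inr (Or.inr rfl))
  · intro U hU
    rcases (hmem U).mp hU with h | h | h
    · exact hne1 U h
    · exact hne2 U h
    · rw [h]; exact ⟨hSne.choose, mem_univ _⟩
  · intro U₁ hU₁ U₂ hU₂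
    rcases (hmem U₁).mp hU₁ with h1 | h1 | h1 <;> rcases (hmem U₂).mp hU₂ with h2 | h2 | h2
    · exact h₁.2.2.2.2.1 U₁ h1 U₂ h2
    · exact Or.inr (Or.inr (disjoint_compl_right.mono (sub1 U₁ h1) (sub2 U₂ h2)))
    · exact Or.inl (h2 ▸ Finset.subset_univ U₁)
    · exact Or.inr (Or.inr ((disjoint_compl_right.mono (sub1 U₂ h2) (sub2 U₁ h1)).symm))
    · exact h₂.2.2.2.2.1 U₁ h1 U₂ h2
    · exact Or.inl (h2 ▸ Finset.subset_univ U₁)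
    · exact Or.inr (Or.inl (h1 ▸ Finset.subset_univ U₂))
    · exact Or.inr (Or.inl (h1 ▸ Finset.subset_univ U₂))
    · exact Or.inl (h1 ▸ h2 ▸ subset_rfl)
  · intro U hU hc
    rcases (hmem U).mp hU with h | h | h
    · obtain ⟨A₁, hA₁, A₂, hA₂, hd, hu, he⟩ := h₁.2.2.2.2.2.1 U h hc
      exact ⟨A₁, (hmem _).mpr (Or.inl hA₁), A₂, (hmem _).mpr (Or.inl hA₂), hd, hu, he⟩
    · obtain ⟨A₁, hA₁, A₂, hA₂, hd, hu, he⟩ := h₂.2.2.2.2.2.1 U h hc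
      exact ⟨A₁, (hmem _).mpr (Or.inr (Or.inl hA₁)), A₂, (hmem _).mpr (Or.inr (Or.inl hA₂)),
        hd, hu, he⟩
    · exact ⟨S, (hmem _).mpr (Or.inl h₁.2.1), Sᶜ, (hmem _).mpr (Or.inr (Or.inl h₂.2.1)),
        disjoint_compl_right, by rw [Finset.union_compl, h], hedge⟩
  · have hdisj12 : Disjoint F₁ F₂ := by
      rw [Finset.disjoint_left]
      intro U hu1 hu2
      obtain ⟨v, hv⟩ := hne1 U hu1
      exact Finset.mem_compl.mp (sub2 U hu2 hv) (sub1 U hu1 hv)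
    have huniv : Finset.univ ∉ F₁ ∪ F₂ := by
      intro h
      rcases mem_union.mp h with h' | h'
      · exact hU1u _ h' rfl
      · exact hU2u _ h' rfl
    rw [Finset.card_union_of_disjoint (Finset.disjoint_singleton_right.mpr huniv),
      Finset.card_union_of_disjoint hdisj12, Finset.card_singleton,
      h₁.2.2.2.2.2.2, h₂.2.2.2.2.2.2]
    have hV : S.card + Sᶜ.card = Fintype.card V := Finset.card_add_card_compl S
    have h1 : 1 ≤ S.card := Finset.card_pos.mpr hSne
    have h2 : 1 ≤ Sᶜ.card := Finset.card_pos.mpr hScne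
    omega
set_option maxHeartbeats 1000000 in
open scoped Classical in
lemma two_mul_atc (G : SimpleGraph V) (h2 : 2 ≤ Fintype.card V)
    (cross : ∀ S : Finset V, S ≠ ∅ → S ≠ Finset.univ →
      ∃ v₁ ∈ S, ∃ v₂ ∈ Sᶜ, G.Adj v₁ v₂) :
    2 * assemblyTreeCount G =
      ∑ S ∈ Finset.univ.filter (fun S : Finset V => S ≠ ∅ ∧ S ≠ Finset.univ),
        Nat.card {F // IsAF G S F} * Nat.card {F // IsAF G Sᶜ F} := by
  have hcard : ∀ (p : Finset (Finset V) → Prop), Nat.card {F // p F} =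
      (Finset.univ.filter p).card := by
    intro p
    rw [Nat.card_eq_fintype_card, Fintype.card_subtype]
  set 𝒯 : Finset (Finset (Finset V)) := Finset.univ.filter (IsAssemblyFamily G) with h𝒯
  set 𝒮 : Finset (Finset V) :=
    Finset.univ.filter (fun S => S ≠ ∅ ∧ S ≠ Finset.univ) with h𝒮
  set PP : Finset (Finset V × Finset (Finset V) × Finset (Finset V)) :=
    Finset.univ.filter (fun p =>
      p.1 ≠ ∅ ∧ p.1 ≠ Finset.univ ∧ IsAF G p.1 p.2.1 ∧ IsAF G p.1ᶜ p.2.2) with hPP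
  have hmemPP : ∀ p, p ∈ PP ↔
      (p.1 ≠ ∅ ∧ p.1 ≠ Finset.univ ∧ IsAF G p.1 p.2.1 ∧ IsAF G p.1ᶜ p.2.2) := by
    intro p; simp [hPP]
  -- Step A : fiber over the first component
  have stepA : PP.card = ∑ S ∈ 𝒮, (Finset.univ.filter (IsAF G S)).card *
      (Finset.univ.filter (IsAF G Sᶜ)).card := by
    rw [Finset.card_eq_sum_card_fiberwise (f := Prod.fst) (t := 𝒮)
      (fun p hp => by
        obtain ⟨h0, hu, -, -⟩ := (hmemPP p).mp hp
        simp [h𝒮, h0, hu])]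
    apply Finset.sum_congr rfl
    intro S hS
    have : (PP.filter (fun p => p.1 = S)).card
        = ((Finset.univ.filter (IsAF G S)) ×ˢ (Finset.univ.filter (IsAF G Sᶜ))).card := by
      apply Finset.card_nbij' (fun p => (p.2.1, p.2.2)) (fun q => (S, q.1, q.2))
      · intro p hp
        obtain ⟨hp1, hp2⟩ := Finset.mem_filter.mp hp
        obtain ⟨-, -, hAF1, hAF2⟩ := (hmemPP p).mp hp1
        rw [Finset.mem_coe, Finset.mem_product]
        exact ⟨Finset.mem_filter.mpr ⟨mem_univ _, hp2 ▸ hAF1⟩,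
          Finset.mem_filter.mpr ⟨mem_univ _, hp2 ▸ hAF2⟩⟩
      · intro q hq
        rw [Finset.mem_coe, Finset.mem_product] at hq
        have hS' := (Finset.mem_filter.mp hS).2
        refine Finset.mem_filter.mpr ⟨(hmemPP _).mpr ⟨hS'.1, hS'.2, ?_, ?_⟩, rfl⟩
        · exact (Finset.mem_filter.mp hq.1).2
        · exact (Finset.mem_filter.mp hq.2).2
      · intro p hp
        obtain ⟨-, hp2⟩ := Finset.mem_filter.mp hp
        obtain ⟨S', q⟩ := p
        simp only at hp2
        subst hp2
        rfl
      · intro q hq; rfl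
    rw [this, Finset.card_product]
  -- Step B : fiber over the glued family
  have mapsto : ∀ p ∈ PP, p.2.1 ∪ p.2.2 ∪ {Finset.univ} ∈ 𝒯 := by
    intro p hp
    obtain ⟨h0, hu, hAF1, hAF2⟩ := (hmemPP p).mp hp
    exact Finset.mem_filter.mpr ⟨mem_univ _, glue G h0 hu (cross p.1 h0 hu) hAF1 hAF2⟩
  have fibcard : ∀ F ∈ 𝒯,
      (PP.filter (fun p => p.2.1 ∪ p.2.2 ∪ {Finset.univ} = F)).card = 2 := by
    intro F hF𝒯
    have hF : IsAssemblyFamily G F := (Finset.mem_filter.mp hF𝒯).2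
    obtain ⟨U₁, hU₁F, U₂, hU₂F, hd, hu, hedge⟩ :=
      hF.2.2.2.2.1 Finset.univ hF.2.1 (by rw [card_univ]; exact h2)
    have hne1 : U₁.Nonempty := hF.2.2.1 _ hU₁F
    have hne2 : U₂.Nonempty := hF.2.2.1 _ hU₂F
    have hU₂c : U₂ = U₁ᶜ := by
      ext v
      rw [Finset.mem_compl]
      constructor
      · intro hv hv1; exact Finset.disjoint_left.mp hd hv1 hv
      · intro hv
        have hvv : v ∈ U₁ ∪ U₂ := hu ▸ mem_univ v
        rcases mem_union.mp hvv with h | h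
        · exact absurd h hv
        · exact h
    subst hU₂c
    have h10 : U₁ ≠ ∅ := Finset.nonempty_iff_ne_empty.mp hne1
    have h1u : U₁ ≠ Finset.univ := by
      intro h
      obtain ⟨v, hv⟩ := hne2
      exact Finset.mem_compl.mp hv (h ▸ mem_univ v)
    have h20 : U₁ᶜ ≠ ∅ := Finset.nonempty_iff_ne_empty.mp hne2
    have h2u : U₁ᶜ ≠ Finset.univ := by
      intro h; exact h10 ((Finset.compl_eq_univ_iff _).mp h)
    have hdec1 := decomp G hF hU₁F hU₂F h10 h1u
    have hdec2 := decomp G hF hU₂F (by rw [compl_compl]; exact hU₁F) h20 h2u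
    rw [compl_compl] at hdec2
    set p₁ : Finset V × Finset (Finset V) × Finset (Finset V) :=
      (U₁, F.filter (· ⊆ U₁), F.filter (· ⊆ U₁ᶜ)) with hp₁def
    set p₂ : Finset V × Finset (Finset V) × Finset (Finset V) :=
      (U₁ᶜ, F.filter (· ⊆ U₁ᶜ), F.filter (· ⊆ U₁)) with hp₂def
    have hfib : PP.filter (fun p => p.2.1 ∪ p.2.2 ∪ {Finset.univ} = F) = {p₁, p₂} := by
      ext p
      simp only [Finset.mem_filter, Finset.mem_insert, Finset.mem_singleton]
      constructor
      · rintro ⟨hpPP, hpF⟩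
        obtain ⟨h0, hu', hAF1, hAF2⟩ := (hmemPP p).mp hpPP
        have hp1F : p.1 ∈ F := by
          rw [← hpF]; exact mem_union_left _ (mem_union_left _ hAF1.2.1)
        have hp1cF : p.1ᶜ ∈ F := by
          rw [← hpF]; exact mem_union_left _ (mem_union_right _ hAF2.2.1)
        have hp1cu : p.1ᶜ ≠ Finset.univ := by
          intro h; exact h0 ((Finset.compl_eq_univ_iff _).mp h)
        have hcomp1 : p.2.1 = F.filter (· ⊆ p.1) := by
          ext U
          rw [Finset.mem_filter]
          constructor
          · intro hU
            exact ⟨by rw [← hpF]; exact mem_union_left _ (mem_union_left _ hU),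
              hAF1.2.2.2.1 U hU⟩
          · rintro ⟨hUF, hUS⟩
            rw [← hpF] at hUF
            rcases mem_union.mp hUF with h' | h'
            · rcases mem_union.mp h' with h'' | h''
              · exact h''
              · exfalso
                obtain ⟨v, hv⟩ := hAF2.2.2.1 U h''
                exact Finset.mem_compl.mp (hAF2.2.2.2.1 U h'' hv) (hUS hv)
            · exfalso
              rw [mem_singleton.mp h'] at hUS
              exact hu' (Finset.univ_subset_iff.mp hUS)
        have hcomp2 : p.2.2 = F.filter (· ⊆ p.1ᶜ) := by
          ext U
          rw [Finset.mem_filter]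
          constructor
          · intro hU
            exact ⟨by rw [← hpF]; exact mem_union_left _ (mem_union_right _ hU),
              hAF2.2.2.2.1 U hU⟩
          · rintro ⟨hUF, hUS⟩
            rw [← hpF] at hUF
            rcases mem_union.mp hUF with h' | h'
            · rcases mem_union.mp h' with h'' | h''
              · exfalso
                obtain ⟨v, hv⟩ := hAF1.2.2.1 U h''
                exact Finset.mem_compl.mp (hUS hv) (hAF1.2.2.2.1 U h'' hv)
              · exact h''
            · exfalso
              rw [mem_singleton.mp h'] at hUS
              have := Finset.univ_subset_iff.mp hUS
              exact hp1cu this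
        rcases mem_of_split G hF hU₁F hU₂F hp1F hu' with ha | ha <;>
          rcases mem_of_split G hF hU₁F hU₂F hp1cF hp1cu with hb | hb
        · exfalso
          apply h1u
          apply Finset.univ_subset_iff.mp
          intro v _
          by_cases hv : v ∈ p.1
          · exact ha hv
          · exact hb (Finset.mem_compl.mpr hv)
        · have hP : p.1 = U₁ := by
            apply subset_antisymm ha
            exact Finset.compl_subset_compl.mp hb
          left
          obtain ⟨P, q⟩ := p
          simp only at hP hcomp1 hcomp2 ⊢
          subst hP
          rw [hp₁def, Prod.mk.injEq]
          exact ⟨rfl, by rw [← hcomp1, ← hcomp2]⟩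
        · have hP : p.1 = U₁ᶜ := by
            apply subset_antisymm ha
            have := Finset.compl_subset_compl.mpr hb
            rwa [compl_compl] at this
          right
          obtain ⟨P, q⟩ := p
          simp only at hP hcomp1 hcomp2 ⊢
          subst hP
          rw [hp₂def, Prod.mk.injEq]
          refine ⟨rfl, ?_⟩
          rw [compl_compl] at hcomp2
          rw [← hcomp1, ← hcomp2]
        · exfalso
          apply h2u
          apply Finset.univ_subset_iff.mp
          intro v _
          by_cases hv : v ∈ p.1
          · exact ha hv
          · exact hb (Finset.mem_compl.mpr hv)
      · rintro (rfl | rfl)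
        · exact ⟨(hmemPP p₁).mpr ⟨h10, h1u, hdec1.1, hdec1.2.1⟩, hdec1.2.2.symm⟩
        · refine ⟨(hmemPP p₂).mpr ⟨h20, h2u, hdec1.2.1, ?_⟩, ?_⟩
          · rw [show p₂.1ᶜ = U₁ from compl_compl U₁]
            exact hdec1.1
          · show F.filter (· ⊆ U₁ᶜ) ∪ F.filter (· ⊆ U₁) ∪ {Finset.univ} = F
            rw [Finset.union_comm (F.filter (· ⊆ U₁ᶜ)) (F.filter (· ⊆ U₁))]
            exact hdec1.2.2.symm
    rw [hfib]
    apply Finset.card_pair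
    intro h
    have hEq : U₁ = U₁ᶜ := congrArg Prod.fst h
    obtain ⟨v, hv⟩ := hne1
    exact Finset.mem_compl.mp (hEq ▸ hv) hv
  have stepB : PP.card = 2 * 𝒯.card := by
    rw [Finset.card_eq_sum_card_fiberwise
      (f := fun p : Finset V × Finset (Finset V) × Finset (Finset V) =>
        p.2.1 ∪ p.2.2 ∪ {Finset.univ}) (t := 𝒯) (fun p hp => mapsto p hp)]
    rw [Finset.sum_congr rfl fibcard, Finset.sum_const, smul_eq_mul, mul_comm]
  have h𝒯card : assemblyTreeCount G = 𝒯.card := by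
    rw [assemblyTreeCount, hcard]
  rw [h𝒯card, ← stepB, stepA]
  apply Finset.sum_congr rfl
  intro S _
  rw [hcard (IsAF G S), hcard (IsAF G Sᶜ)]
section Multipartite

variable {N : ℕ}

lemma cmg_adj (d : Fin N → ℕ) (u v : Σ i : Fin N, Fin (d i)) :
    (completeMultipartiteGraph' d).Adj u v ↔ u.1 ≠ v.1 := by
  unfold completeMultipartiteGraph'
  rw [SimpleGraph.fromRel_adj]
  constructor
  · rintro ⟨-, h | h⟩
    · exact h
    · exact h.symm
  · intro h
    exact ⟨fun e => h (congrArg Sigma.fst e), Or.inl h⟩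

/-- The profile of a subset of the vertices of a multipartite graph. -/
def prof {d : Fin N → ℕ} (S : Finset (Σ i : Fin N, Fin (d i))) : Fin N → ℕ :=
  fun i => (S.filter (fun v => v.1 = i)).card

/-- The pslice of a subset of the vertices in part `i`. -/
def pslice {d : Fin N → ℕ} (S : Finset (Σ i : Fin N, Fin (d i))) (i : Fin N) :
    Finset (Fin (d i)) :=
  Finset.univ.filter (fun k => (⟨i, k⟩ : Σ i, Fin (d i)) ∈ S)

lemma pslice_card {d : Fin N → ℕ} (S : Finset (Σ i : Fin N, Fin (d i))) (i : Fin N) :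
    (pslice S i).card = prof S i := by
  apply Finset.card_nbij (fun k => (⟨i, k⟩ : Σ i, Fin (d i)))
  · intro k hk
    exact mem_filter.mpr ⟨(mem_filter.mp hk).2, rfl⟩
  · intro a _ b _ h
    simpa using h
  · intro v hv
    rw [Finset.mem_coe, mem_filter] at hv
    obtain ⟨j, k⟩ := v
    obtain ⟨hvS, hj⟩ := hv
    simp only at hj
    subst hj
    exact ⟨k, by simp [pslice, hvS], rfl⟩

lemma prof_univ (d : Fin N → ℕ) (i : Fin N) :
    prof (Finset.univ : Finset (Σ i : Fin N, Fin (d i))) i = d i := by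
  rw [← pslice_card]
  simp [pslice]

lemma prof_add_compl {d : Fin N → ℕ} (S : Finset (Σ i : Fin N, Fin (d i))) (i : Fin N) :
    prof S i + prof Sᶜ i = d i := by
  have hdd : Disjoint (S.filter (fun v => v.1 = i)) (Sᶜ.filter (fun v => v.1 = i)) :=
    Finset.disjoint_filter_filter disjoint_compl_right
  have hun : S.filter (fun v => v.1 = i) ∪ Sᶜ.filter (fun v => v.1 = i)
      = Finset.univ.filter (fun v => v.1 = i) := by
    rw [← Finset.filter_union, Finset.union_compl]
  have := Finset.card_union_of_disjoint hdd
  rw [hun] at this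
  have h2 : (Finset.univ.filter (fun v : Σ i : Fin N, Fin (d i) => v.1 = i)).card = d i :=
    prof_univ d i
  unfold prof
  omega

lemma sum_prof {d : Fin N → ℕ} (S : Finset (Σ i : Fin N, Fin (d i))) :
    ∑ i, prof S i = S.card :=
  (Finset.card_eq_sum_card_fiberwise (f := Sigma.fst) (t := Finset.univ)
    (fun x _ => mem_univ _)).symm

lemma card_sigma_eq {d : Fin N → ℕ} :
    Fintype.card (Σ i : Fin N, Fin (d i)) = ∑ i, d i := by
  rw [Fintype.card_sigma]
  simp

lemma prof_empty_iff {d : Fin N → ℕ} {S : Finset (Σ i : Fin N, Fin (d i))}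
    (h : prof S = fun _ => 0) : S = ∅ := by
  rw [← Finset.card_eq_zero, ← sum_prof]
  simp [h]

lemma prof_univ_iff {d : Fin N → ℕ} {S : Finset (Σ i : Fin N, Fin (d i))}
    (h : prof S = d) : S = Finset.univ := by
  apply Finset.eq_univ_of_card
  rw [← sum_prof, card_sigma_eq, h]

lemma card_isAF_mp (d : Fin N → ℕ) (S : Finset (Σ i : Fin N, Fin (d i))) :
    Nat.card {F // IsAF (completeMultipartiteGraph' d) S F}
      = assemblyTreeCount (completeMultipartiteGraph' (prof S)) := by
  have hE : ∀ i : Fin N, Fintype.card ↥(S.filter (fun v => v.1 = i)) = prof S i := by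
    intro i
    rw [Fintype.card_coe]
    rfl
  let E : ∀ i : Fin N, Fin (prof S i) ≃ ↥(S.filter (fun v => v.1 = i)) :=
    fun i => (Fintype.equivFinOfCardEq (hE i)).symm
  let ψf : (Σ i : Fin N, Fin (prof S i)) → (Σ i : Fin N, Fin (d i)) :=
    fun x => (E x.1 x.2).1
  have hmem : ∀ x, ψf x ∈ S.filter (fun v => v.1 = x.1) := fun x => (E x.1 x.2).2
  have hfst : ∀ x, (ψf x).1 = x.1 := fun x => (mem_filter.mp (hmem x)).2
  have hinj : Function.Injective ψf := by
    rintro ⟨i, k⟩ ⟨j, l⟩ h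
    have hij : i = j := by
      have h1 : i = (ψf ⟨i, k⟩).1 := (hfst ⟨i, k⟩).symm
      rw [h1, h]
      exact hfst ⟨j, l⟩
    subst hij
    have h2 : E i k = E i l := Subtype.ext h
    have h4 : k = l := (E i).injective h2
    rw [h4]
  let ψ : (Σ i : Fin N, Fin (prof S i)) ↪ (Σ i : Fin N, Fin (d i)) := ⟨ψf, hinj⟩
  have himg : Finset.univ.image ψ = S := by
    apply Finset.eq_of_subset_of_card_le
    · intro v hv
      obtain ⟨x, -, rfl⟩ := Finset.mem_image.mp hv
      exact (mem_filter.mp (hmem x)).1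
    · rw [Finset.card_image_of_injective _ ψ.injective, card_univ, card_sigma_eq, sum_prof]
  have hadj : ∀ x y, (completeMultipartiteGraph' d).Adj (ψ x) (ψ y)
      ↔ (completeMultipartiteGraph' (prof S)).Adj x y := by
    intro x y
    rw [cmg_adj, cmg_adj]
    show (ψf x).1 ≠ (ψf y).1 ↔ _
    rw [hfst x, hfst y]
  conv_lhs => rw [← himg]
  exact card_isAF_eq _ _ ψ hadj

lemma pslice_sigma {d : Fin N → ℕ} (f : ∀ i : Fin N, Finset (Fin (d i))) (i : Fin N) :
    pslice (Finset.univ.sigma f) i = f i := by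
  ext k
  simp [pslice, Finset.mem_sigma]

lemma card_prof_fiber (d : Fin N → ℕ) (e : Fin N → ℕ) :
    ((Finset.univ : Finset (Finset (Σ i : Fin N, Fin (d i)))).filter
        (fun S => prof S = e)).card = ∏ i, (d i).choose (e i) := by
  classical
  have hrhs : (∏ i, (d i).choose (e i)) =
      (Fintype.piFinset (fun i => Finset.powersetCard (e i)
        (Finset.univ : Finset (Fin (d i))))).card := by
    rw [Fintype.card_piFinset]
    apply Finset.prod_congr rfl
    intro i _
    rw [Finset.card_powersetCard, card_univ, Fintype.card_fin]
  rw [hrhs]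
  apply Finset.card_nbij' (fun S => fun i => pslice S i)
    (fun f => (Finset.univ : Finset (Fin N)).sigma f)
  · intro S hS
    rw [Finset.mem_coe, Fintype.mem_piFinset]
    intro i
    rw [Finset.mem_powersetCard]
    exact ⟨Finset.subset_univ _, by rw [pslice_card, (mem_filter.mp hS).2]⟩
  · intro f hf
    rw [Finset.mem_coe, Fintype.mem_piFinset] at hf
    refine mem_filter.mpr ⟨mem_univ _, funext fun i => ?_⟩
    rw [← pslice_card, pslice_sigma]
    exact (Finset.mem_powersetCard.mp (hf i)).2
  · intro S _
    ext ⟨i, k⟩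
    simp [Finset.mem_sigma, pslice]
  · intro f _
    funext i
    exact pslice_sigma f i

lemma key_recursion (d : Fin N → ℕ) (htwo : ∃ i j, i ≠ j ∧ d i ≠ 0 ∧ d j ≠ 0) :
    2 * assemblyTreeCount (completeMultipartiteGraph' d) =
      ∑ p ∈ (Finset.HasAntidiagonal.antidiagonal (Finsupp.equivFunOnFinite.symm d)).filter
          (fun p => p.1 ≠ 0 ∧ p.2 ≠ 0),
        (∏ i, (d i).choose (p.1 i)) *
          (assemblyTreeCount (completeMultipartiteGraph' (⇑p.1)) *
           assemblyTreeCount (completeMultipartiteGraph' (⇑p.2))) := by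
  classical
  obtain ⟨i₀, j₀, hij, hi, hj⟩ := htwo
  have h2 : 2 ≤ Fintype.card (Σ i : Fin N, Fin (d i)) := by
    rw [card_sigma_eq]
    have hle : d i₀ + d j₀ ≤ ∑ i, d i := by
      rw [← Finset.sum_pair hij]
      exact Finset.sum_le_sum_of_subset (Finset.subset_univ _)
    omega
  have cross : ∀ S : Finset (Σ i : Fin N, Fin (d i)), S ≠ ∅ → S ≠ Finset.univ →
      ∃ v₁ ∈ S, ∃ v₂ ∈ Sᶜ, (completeMultipartiteGraph' d).Adj v₁ v₂ := by
    intro S hS0 hSu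
    obtain ⟨u, hu⟩ := Finset.nonempty_iff_ne_empty.mpr hS0
    have hScne : Sᶜ.Nonempty := by
      rcases Finset.eq_empty_or_nonempty Sᶜ with h | h
      · exact absurd ((Finset.compl_eq_empty_iff _).mp h) hSu
      · exact h
    obtain ⟨w, hw⟩ := hScne
    by_cases hadj : u.1 ≠ w.1
    · exact ⟨u, hu, w, hw, (cmg_adj d u w).mpr hadj⟩
    · push_neg at hadj
      have hz : ∃ z : Σ i : Fin N, Fin (d i), z.1 ≠ u.1 := by
        rcases eq_or_ne u.1 i₀ with h | h
        · exact ⟨⟨j₀, ⟨0, Nat.pos_of_ne_zero hj⟩⟩, by rw [h]; exact hij.symm⟩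
        · exact ⟨⟨i₀, ⟨0, Nat.pos_of_ne_zero hi⟩⟩, fun hh => h hh.symm⟩
      obtain ⟨z, hz⟩ := hz
      by_cases hzS : z ∈ S
      · exact ⟨z, hzS, w, hw, (cmg_adj d z w).mpr (by rw [← hadj]; exact hz)⟩
      · exact ⟨u, hu, z, Finset.mem_compl.mpr hzS, (cmg_adj d u z).mpr (Ne.symm hz)⟩
  set SS : Finset (Finset (Σ i : Fin N, Fin (d i))) :=
    Finset.univ.filter (fun S => S ≠ ∅ ∧ S ≠ Finset.univ) with hSS
  rw [two_mul_atc _ h2 cross]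
  have hsumeq : ∑ S ∈ SS, Nat.card {F // IsAF (completeMultipartiteGraph' d) S F} *
        Nat.card {F // IsAF (completeMultipartiteGraph' d) Sᶜ F}
      = ∑ S ∈ SS, assemblyTreeCount (completeMultipartiteGraph' (prof S)) *
        assemblyTreeCount (completeMultipartiteGraph' (prof Sᶜ)) :=
    Finset.sum_congr rfl (fun S _ => by rw [card_isAF_mp d S, card_isAF_mp d Sᶜ])
  rw [hsumeq]
  set D : Fin N →₀ ℕ := Finsupp.equivFunOnFinite.symm d with hD
  have hDcoe : ⇑D = d := rfl
  set m : Finset (Σ i : Fin N, Fin (d i)) → (Fin N →₀ ℕ) × (Fin N →₀ ℕ) :=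
    fun S => (Finsupp.equivFunOnFinite.symm (prof S),
      Finsupp.equivFunOnFinite.symm (prof Sᶜ)) with hm
  have hprofne : ∀ S : Finset (Σ i : Fin N, Fin (d i)), S ≠ ∅ →
      Finsupp.equivFunOnFinite.symm (prof S) ≠ 0 := by
    intro S hS0 h
    apply hS0
    apply prof_empty_iff
    funext i
    have h1 : (Finsupp.equivFunOnFinite.symm (prof S)) i = ((0 : Fin N →₀ ℕ) : Fin N → ℕ) i := by
      rw [h]
    simpa using h1
  have hmaps : ∀ S ∈ SS, m S ∈ (Finset.HasAntidiagonal.antidiagonal D).filter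
      (fun p => p.1 ≠ 0 ∧ p.2 ≠ 0) := by
    intro S hS
    obtain ⟨-, hS0, hSu⟩ := mem_filter.mp hS
    rw [mem_filter, Finset.HasAntidiagonal.mem_antidiagonal]
    refine ⟨?_, hprofne S hS0, hprofne Sᶜ ?_⟩
    · apply Finsupp.ext
      intro i
      rw [Finsupp.add_apply]
      show prof S i + prof Sᶜ i = D i
      rw [prof_add_compl]
      rfl
    · intro h
      exact hSu (by rwa [Finset.compl_eq_empty_iff] at h)
  rw [← Finset.sum_fiberwise_of_maps_to hmaps]
  apply Finset.sum_congr rfl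
  intro p hp
  obtain ⟨hpmem, hp1, hp2⟩ := mem_filter.mp hp
  have hpanti := Finset.HasAntidiagonal.mem_antidiagonal.mp hpmem
  have hsum : ∀ i, p.1 i + p.2 i = d i := by
    intro i
    have h1 : (p.1 + p.2) i = D i := by rw [hpanti]
    rw [Finsupp.add_apply] at h1
    exact h1
  have hfib_eq : SS.filter (fun S => m S = p)
      = Finset.univ.filter (fun S : Finset (Σ i : Fin N, Fin (d i)) => prof S = ⇑p.1) := by
    ext S
    simp only [mem_filter, mem_univ, true_and]
    constructor
    · rintro ⟨-, hmS⟩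
      have : ⇑(m S).1 = ⇑p.1 := by rw [hmS]
      exact this
    · intro hprof
      have hS0 : S ≠ ∅ := by
        rintro rfl
        apply hp1
        apply Finsupp.ext
        intro i
        have h1 := congrFun hprof i
        simp only [prof, Finset.filter_empty, Finset.card_empty] at h1
        exact h1.symm
      have hSu : S ≠ Finset.univ := by
        rintro rfl
        apply hp2
        apply Finsupp.ext
        intro i
        have h1 := congrFun hprof i
        rw [prof_univ] at h1
        have h3 := hsum i
        show p.2 i = 0
        omega
      refine ⟨mem_filter.mpr ⟨mem_univ _, hS0, hSu⟩, ?_⟩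
      have hcomp : prof Sᶜ = ⇑p.2 := by
        funext i
        have h1 := prof_add_compl S i
        have h2 := congrFun hprof i
        have h3 := hsum i
        omega
      rw [hm]
      simp only
      rw [hprof, hcomp, Finsupp.equivFunOnFinite_symm_coe, Finsupp.equivFunOnFinite_symm_coe]
  rw [hfib_eq]
  have hconst : ∀ S ∈ Finset.univ.filter
      (fun S : Finset (Σ i : Fin N, Fin (d i)) => prof S = ⇑p.1),
      assemblyTreeCount (completeMultipartiteGraph' (prof S)) *
        assemblyTreeCount (completeMultipartiteGraph' (prof Sᶜ))
      = assemblyTreeCount (completeMultipartiteGraph' (⇑p.1)) *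
        assemblyTreeCount (completeMultipartiteGraph' (⇑p.2)) := by
    intro S hS
    have hprof : prof S = ⇑p.1 := (mem_filter.mp hS).2
    have hcomp : prof Sᶜ = ⇑p.2 := by
      funext i
      have h1 := prof_add_compl S i
      have h2 := congrFun hprof i
      have h3 := hsum i
      omega
    rw [hprof, hcomp]
  rw [Finset.sum_congr rfl hconst, Finset.sum_const, card_prof_fiber, smul_eq_mul]

end Multipartite
lemma sum_single_fin {N : ℕ} (i : Fin N) (k : ℕ) :
    ∑ j : Fin N, (Finsupp.single i k) j = k := by
  rw [Finset.sum_eq_single_of_mem i (mem_univ i)]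
  · exact Finsupp.single_eq_same
  · intro j _ hj
    exact Finsupp.single_eq_of_ne' (Ne.symm hj)

lemma atc_single {N : ℕ} (i : Fin N) (k : ℕ) :
    assemblyTreeCount (completeMultipartiteGraph' (fun j => (Finsupp.single i k) j))
      = if k = 1 then 1 else 0 := by
  have hcard : Fintype.card (Σ j : Fin N, Fin ((Finsupp.single i k) j)) = k := by
    rw [card_sigma_eq, sum_single_fin]
  match k with
  | 0 => exact atc_eq_zero_of_card_eq_zero _ hcard
  | 1 => rw [atc_eq_one_of_card_eq_one _ hcard]; rfl
  | (n+2) =>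
    rw [if_neg (by omega)]
    apply atc_eq_zero_of_edgeless _ (by omega : 2 ≤ Fintype.card _)
    intro u v huv
    have hu : u.1 = i := by
      by_contra h
      have h1 := u.2.isLt
      have h0 : (Finsupp.single i (n+2)) u.fst = 0 := Finsupp.single_eq_of_ne' (Ne.symm h)
      omega
    have hv : v.1 = i := by
      by_contra h
      have h1 := v.2.isLt
      have h0 : (Finsupp.single i (n+2)) v.fst = 0 := Finsupp.single_eq_of_ne' (Ne.symm h)
      omega
    exact (cmg_adj _ u v).mp huv (by rw [hu, hv])
open MvPowerSeries in
/-- The EGF for the numbers of assembly trees of complete multipartite graphs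
is `A(x) = 1 - √(1 - N + ∑ᵢ (1 - xᵢ)²)`; in particular for `N = 2` (complete
bipartite graphs) it is `1 - √((1-x)² + (1-y)² - 1)`. -/
theorem multipartite_egf {N : ℕ} (A : MvPowerSeries (Fin N) ℚ)
    (hA : ∀ d : Fin N →₀ ℕ,
      coeff (R := ℚ) d A = (assemblyTreeCount (completeMultipartiteGraph' (fun i => d i)) : ℚ) /
        ∏ i, (d i).factorial) :
    constantCoeff (σ := Fin N) (R := ℚ) A = 0 ∧
    (1 - A) ^ 2 = C (σ := Fin N) (R := ℚ) (1 - N) + ∑ i, (1 - X i) ^ 2 := by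
  classical
  have hc0 : coeff (R := ℚ) (0 : Fin N →₀ ℕ) A = 0 := by
    rw [hA]
    have h0 : assemblyTreeCount (completeMultipartiteGraph' (fun i => (0 : Fin N →₀ ℕ) i)) = 0 :=
      atc_eq_zero_of_card_eq_zero _ (by rw [card_sigma_eq]; simp)
    rw [h0]
    simp
  have hA0 : constantCoeff (σ := Fin N) (R := ℚ) A = 0 := by
    rw [← MvPowerSeries.coeff_zero_eq_constantCoeff_apply]
    exact hc0
  refine ⟨hA0, ?_⟩
  have hcsingle : ∀ (i : Fin N) (k : ℕ),
      coeff (R := ℚ) (Finsupp.single i k) A = if k = 1 then 1 else 0 := by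
    intro i k
    rw [hA, atc_single]
    by_cases hk : k = 1
    · subst hk
      rw [if_pos rfl, if_pos rfl]
      have hprod : ∏ j, ((Finsupp.single i 1) j).factorial = 1 := by
        apply Finset.prod_eq_one
        intro j _
        rcases eq_or_ne i j with rfl | h
        · rw [Finsupp.single_eq_same]
          rfl
        · rw [Finsupp.single_eq_of_ne' h]
          rfl
      rw [hprod]
      norm_num
    · rw [if_neg hk, if_neg hk]
      norm_num
  have main : ∀ dd : Fin N →₀ ℕ,
      (∑ p ∈ Finset.HasAntidiagonal.antidiagonal dd, coeff (R := ℚ) p.1 A * coeff (R := ℚ) p.2 A) - 2 * coeff (R := ℚ) dd A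
        = ∑ i, ((if dd = Finsupp.single i 2 then (1:ℚ) else 0)
            - 2 * (if dd = Finsupp.single i 1 then (1:ℚ) else 0)) := by
    intro dd
    by_cases h0 : dd = 0
    · subst h0
      rw [Finsupp.antidiagonal_zero]
      rw [Finset.sum_singleton]
      rw [hc0]
      have hRHS0 : ∑ i : Fin N, ((if (0 : Fin N →₀ ℕ) = Finsupp.single i 2 then (1:ℚ) else 0)
          - 2 * (if (0 : Fin N →₀ ℕ) = Finsupp.single i 1 then (1:ℚ) else 0)) = 0 :=
        Finset.sum_eq_zero (fun i _ => by
          rw [if_neg (fun h => by simpa using (Finsupp.single_eq_zero.mp h.symm)),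
            if_neg (fun h => by simpa using (Finsupp.single_eq_zero.mp h.symm))]
          ring)
      rw [hRHS0]
      ring
    by_cases hsupp : ∃ i j, i ≠ j ∧ dd i ≠ 0 ∧ dd j ≠ 0
    · -- at least two parts occupied
      have hne : ∀ (i : Fin N) (k : ℕ), dd ≠ Finsupp.single i k := by
        rintro i k rfl
        obtain ⟨a, b, hab, ha, hb⟩ := hsupp
        have ha' : a = i := by
          by_contra h
          exact ha (Finsupp.single_eq_of_ne' (Ne.symm h))
        have hb' : b = i := by
          by_contra h
          exact hb (Finsupp.single_eq_of_ne' (Ne.symm h))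
        exact hab (ha'.trans hb'.symm)
      have hRHS : ∑ i : Fin N, ((if dd = Finsupp.single i 2 then (1:ℚ) else 0)
          - 2 * (if dd = Finsupp.single i 1 then (1:ℚ) else 0)) = 0 :=
        Finset.sum_eq_zero (fun i _ => by
          rw [if_neg (hne i 2), if_neg (hne i 1)]; ring)
      rw [hRHS]
      have hLHS : (∑ p ∈ Finset.HasAntidiagonal.antidiagonal dd, coeff (R := ℚ) p.1 A * coeff (R := ℚ) p.2 A)
          = 2 * coeff (R := ℚ) dd A := by
        have hrec := key_recursion (fun i => dd i) hsupp
        rw [Finsupp.equivFunOnFinite_symm_coe dd] at hrec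
        set I := (Finset.HasAntidiagonal.antidiagonal dd).filter (fun p => p.1 ≠ 0 ∧ p.2 ≠ 0) with hI
        have hdrop : ∑ p ∈ I, coeff (R := ℚ) p.1 A * coeff (R := ℚ) p.2 A
            = ∑ p ∈ Finset.HasAntidiagonal.antidiagonal dd, coeff (R := ℚ) p.1 A * coeff (R := ℚ) p.2 A := by
          apply Finset.sum_filter_of_ne
          intro p _ hne0
          constructor
          · intro hz
            exact hne0 (by rw [hz, hc0, zero_mul])
          · intro hz
            exact hne0 (by rw [hz, hc0, mul_zero])
        rw [← hdrop]
        have hterm : ∀ p ∈ I, coeff (R := ℚ) p.1 A * coeff (R := ℚ) p.2 A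
            = (∏ i, ((dd i).choose (p.1 i) : ℚ))
              * ((assemblyTreeCount (completeMultipartiteGraph' (fun i => p.1 i)) : ℚ)
                * (assemblyTreeCount (completeMultipartiteGraph' (fun i => p.2 i)) : ℚ))
              / ∏ i, ((dd i).factorial : ℚ) := by
          intro p hp
          obtain ⟨hpmem, hp1, hp2⟩ := Finset.mem_filter.mp hp
          have hpa := Finset.HasAntidiagonal.mem_antidiagonal.mp hpmem
          have hple : ∀ i, p.1 i + p.2 i = dd i := by
            intro i
            have h1 : (p.1 + p.2) i = dd i := by rw [hpa]
            rw [Finsupp.add_apply] at h1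
            exact h1
          have hfactN : (∏ i, (dd i).factorial)
              = (∏ i, (dd i).choose (p.1 i)) *
                ((∏ i, (p.1 i).factorial) * (∏ i, (p.2 i).factorial)) := by
            rw [← Finset.prod_mul_distrib, ← Finset.prod_mul_distrib]
            apply Finset.prod_congr rfl
            intro i _
            have hle : p.1 i ≤ dd i := by have := hple i; omega
            have h2 : p.2 i = dd i - p.1 i := by have := hple i; omega
            rw [h2, ← mul_assoc]
            exact (Nat.choose_mul_factorial_mul_factorial hle).symm
          have hfactQ : (∏ i, ((dd i).factorial : ℚ))
              = (∏ i, ((dd i).choose (p.1 i) : ℚ)) *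
                ((∏ i, ((p.1 i).factorial : ℚ)) * (∏ i, ((p.2 i).factorial : ℚ))) := by
            exact_mod_cast congrArg (Nat.cast (R := ℚ)) hfactN
          have hCne : (∏ i, ((dd i).choose (p.1 i) : ℚ)) ≠ 0 := by
            apply Finset.prod_ne_zero_iff.mpr
            intro i _
            have hle : p.1 i ≤ dd i := by have := hple i; omega
            exact_mod_cast (Nat.choose_pos hle).ne'
          rw [hA p.1, hA p.2]
          push_cast
          rw [div_mul_div_comm, hfactQ, mul_div_mul_left _ _ hCne]
        rw [Finset.sum_congr rfl hterm, ← Finset.sum_div]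
        have hrecQ : (2 : ℚ) *
            (assemblyTreeCount (completeMultipartiteGraph' (fun i => dd i)) : ℚ)
            = ∑ p ∈ I, (∏ i, ((dd i).choose (p.1 i) : ℚ))
              * ((assemblyTreeCount (completeMultipartiteGraph' (fun i => p.1 i)) : ℚ)
                * (assemblyTreeCount (completeMultipartiteGraph' (fun i => p.2 i)) : ℚ)) := by
          have := congrArg (Nat.cast (R := ℚ)) hrec
          push_cast at this
          exact this
        rw [← hrecQ, hA dd]
        push_cast
        ring
      rw [hLHS]
      ring
    · -- single part occupied
      push_neg at hsupp
      obtain ⟨i₀, hi₀⟩ : ∃ i, dd i ≠ 0 := by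
        by_contra h
        push_neg at h
        exact h0 (Finsupp.ext h)
      have hdd : dd = Finsupp.single i₀ (dd i₀) := by
        ext j
        rcases eq_or_ne j i₀ with rfl | h
        · rw [Finsupp.single_eq_same]
        · rw [Finsupp.single_eq_of_ne' (Ne.symm h)]
          exact hsupp i₀ j (Ne.symm h) hi₀
      set m := dd i₀ with hm
      have hm1 : 1 ≤ m := Nat.pos_of_ne_zero hi₀
      rw [hdd, hcsingle i₀ m, Finsupp.antidiagonal_single, Finset.sum_map]
      have hq : ∀ q ∈ Finset.HasAntidiagonal.antidiagonal m,
          coeff (R := ℚ) ((({ toFun := Finsupp.single i₀, inj' := Finsupp.single_injective i₀ }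
              : ℕ ↪ (Fin N →₀ ℕ)).prodMap
            { toFun := Finsupp.single i₀, inj' := Finsupp.single_injective i₀ } q).1) A *
          coeff (R := ℚ) ((({ toFun := Finsupp.single i₀, inj' := Finsupp.single_injective i₀ }
              : ℕ ↪ (Fin N →₀ ℕ)).prodMap
            { toFun := Finsupp.single i₀, inj' := Finsupp.single_injective i₀ } q).2) A
          = if q = (1, 1) then (1:ℚ) else 0 := by
        intro q _
        obtain ⟨a, b⟩ := q
        simp only [Function.Embedding.coe_prodMap, Function.Embedding.coeFn_mk, Prod.map_fst,
          Prod.map_snd, Prod.map_apply]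
        rw [hcsingle, hcsingle]
        by_cases h1 : a = 1 <;> by_cases h2 : b = 1 <;> simp [h1, h2, Prod.ext_iff]
      rw [Finset.sum_congr rfl hq,
        Finset.sum_ite_eq' (Finset.HasAntidiagonal.antidiagonal m) ((1, 1) : ℕ × ℕ) (fun _ => (1:ℚ))]
      have hmem11 : (((1, 1) : ℕ × ℕ) ∈ Finset.HasAntidiagonal.antidiagonal m) ↔ m = 2 := by
        rw [Finset.HasAntidiagonal.mem_antidiagonal]
        omega
      have e2 : ∀ j : Fin N, (Finsupp.single i₀ m = Finsupp.single j 2) ↔ (j = i₀ ∧ m = 2) := by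
        intro j
        rw [Finsupp.single_eq_single_iff]
        constructor
        · rintro (⟨h, h'⟩ | ⟨h, h'⟩)
          · exact ⟨h.symm, h'⟩
          · omega
        · rintro ⟨h, h'⟩
          exact Or.inl ⟨h.symm, h'⟩
      have e1 : ∀ j : Fin N, (Finsupp.single i₀ m = Finsupp.single j 1) ↔ (j = i₀ ∧ m = 1) := by
        intro j
        rw [Finsupp.single_eq_single_iff]
        constructor
        · rintro (⟨h, h'⟩ | ⟨h, h'⟩)
          · exact ⟨h.symm, h'⟩
          · omega
        · rintro ⟨h, h'⟩
          exact Or.inl ⟨h.symm, h'⟩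
      have hRHS : ∑ i : Fin N, ((if Finsupp.single i₀ m = Finsupp.single i 2 then (1:ℚ) else 0)
            - 2 * (if Finsupp.single i₀ m = Finsupp.single i 1 then (1:ℚ) else 0))
          = (if m = 2 then (1:ℚ) else 0) - 2 * (if m = 1 then (1:ℚ) else 0) := by
        rw [Finset.sum_eq_single_of_mem i₀ (mem_univ i₀)]
        · rw [if_congr (e2 i₀) rfl rfl, if_congr (e1 i₀) rfl rfl]
          simp
        · intro j _ hj
          rw [if_neg (fun h => hj ((e2 j).mp h).1), if_neg (fun h => hj ((e1 j).mp h).1)]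
          ring
      rw [hRHS, if_congr hmem11 rfl rfl]
  -- assemble the power series identity
  have E : A * A - C (σ := Fin N) (R := ℚ) 2 * A = ∑ i, (X i * X i - C (σ := Fin N) (R := ℚ) 2 * X i) := by
    ext dd
    rw [map_sub, MvPowerSeries.coeff_mul, MvPowerSeries.coeff_C_mul, map_sum]
    have hterm : ∀ i : Fin N, coeff (R := ℚ) dd (X i * X i - C (σ := Fin N) (R := ℚ) 2 * X i)
        = (if dd = Finsupp.single i 2 then (1:ℚ) else 0)
            - 2 * (if dd = Finsupp.single i 1 then (1:ℚ) else 0) := by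
      intro i
      rw [map_sub, MvPowerSeries.coeff_C_mul, ← pow_two, MvPowerSeries.X_pow_eq,
        MvPowerSeries.coeff_monomial, MvPowerSeries.coeff_X]
    rw [Finset.sum_congr rfl (fun i _ => hterm i)]
    exact main dd
  have hC2 : (C (σ := Fin N) (R := ℚ)) 2 = 2 := map_ofNat _ 2
  have hCN : (C (σ := Fin N) (R := ℚ)) (N : ℚ) = (N : MvPowerSeries (Fin N) ℚ) := map_natCast _ N
  have hsum2 : ∑ i : Fin N, ((1 : MvPowerSeries (Fin N) ℚ) - X i)^2
      = (N : MvPowerSeries (Fin N) ℚ) + (A * A - C (σ := Fin N) (R := ℚ) 2 * A) := by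
    have h1 : ∀ i : Fin N, ((1 : MvPowerSeries (Fin N) ℚ) - X i)^2
        = 1 + (X i * X i - C (σ := Fin N) (R := ℚ) 2 * X i) := by
      intro i
      rw [hC2]
      ring
    rw [Finset.sum_congr rfl (fun i _ => h1 i), Finset.sum_add_distrib, Finset.sum_const,
      card_univ, Fintype.card_fin, nsmul_eq_mul, mul_one, ← E]
  calc (1 - A)^2 = 1 - C (σ := Fin N) (R := ℚ) 2 * A + A * A := by rw [hC2]; ring
  _ = C (σ := Fin N) (R := ℚ) (1 - N) + ((N : MvPowerSeries (Fin N) ℚ) + (A * A - C (σ := Fin N) (R := ℚ) 2 * A)) := by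
      rw [map_sub, map_one, hCN]
      ring
  _ = C (σ := Fin N) (R := ℚ) (1 - N) + ∑ i, (1 - X i)^2 := by rw [hsum2]
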